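/- Let h : [0,∞) → [0,∞) be a non-increasing function and suppose there exists r > 0 such that ∫_t^∞ h(s) ds ≤ r·h(t) for all t ≥ 0. Then h(t) ≤ h(0)·e^{1 - t/r} for all t ≥ r. -/

import Mathlib

open MeasureTheory Real Set

theorem stmt_0 (h : ℝ → ℝ) (r : ℝ) (hr : 0 < r)
    (hnonneg : ∀ t, 0 ≤ t → 0 ≤ h t)
    (hmono : AntitoneOn h (Ici 0))
    (hint : ∀ t, 0 ≤ t → IntegrableOn h (Ici t))
    (hineq : ∀ t, 0 ≤ t → ∫ s in Ici t, h s ≤ r * h t) :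
    ∀ t, r ≤ t → h t ≤ h 0 * Real.exp (1 - t / r) := by
  set F : ℝ → ℝ := fun t => ∫ s in Ici t, h s with hF
  have hFnonneg : ∀ t, 0 ≤ t → 0 ≤ F t := by
    intro t ht
    apply setIntegral_nonneg measurableSet_Ici
    intro x hx
    exact hnonneg x (le_trans ht hx)
  -- key decomposition / monotonicity lemma
  have key : ∀ a b : ℝ, 0 ≤ a → a ≤ b → (b - a) * h b + F b ≤ F a := by
    intro a b ha hab
    have hb : 0 ≤ b := le_trans ha hab
    have hsplit : F a = (∫ s in Icc a b, h s) + F b := by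
      have hdisj : Disjoint (Icc a b) (Ioi b) := by
        apply Set.disjoint_left.mpr
        intro x hx hx'
        exact absurd hx.2 (not_le.mpr hx')
      have hunion : Icc a b ∪ Ioi b = Ici a := by
        ext x
        simp only [mem_union, mem_Icc, mem_Ioi, mem_Ici]
        constructor
        · rintro (⟨h1, _⟩ | h1)
          · exact h1
          · linarith
        · intro hx
          rcases le_or_gt x b with h1 | h1
          · exact Or.inl ⟨hx, h1⟩
          · exact Or.inr h1
      have h1 : IntegrableOn h (Icc a b) :=
        (hint a ha).mono_set (Icc_subset_Ici_self)
      have h2 : IntegrableOn h (Ioi b) :=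
        (hint b hb).mono_set (Ioi_subset_Ici_self)
      have := setIntegral_union hdisj measurableSet_Ioi h1 h2
      rw [hunion] at this
      rw [hF]
      simp only
      rw [this, MeasureTheory.integral_Ici_eq_integral_Ioi]
    have hlow : (b - a) * h b ≤ ∫ s in Icc a b, h s := by
      have h1 : IntegrableOn h (Icc a b) :=
        (hint a ha).mono_set (Icc_subset_Ici_self)
      have : ∫ _ in Icc a b, h b ≤ ∫ s in Icc a b, h s := by
        apply setIntegral_mono_on ((integrableOn_const_iff (C := h b)).mpr (Or.inr (by
          rw [Real.volume_Icc]; exact ENNReal.ofReal_lt_top))) h1 measurableSet_Icc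
        intro x hx
        exact hmono (mem_Ici.mpr (le_trans ha hx.1)) (mem_Ici.mpr hb) hx.2
      rw [setIntegral_const, smul_eq_mul] at this
      rw [measureReal_def, Real.volume_Icc, ENNReal.toReal_ofReal (by linarith)] at this
      linarith [this]
    linarith
  -- iterated decay
  have iter : ∀ (n : ℕ) (δ : ℝ), 0 ≤ δ → F (n * δ) * (1 + δ / r) ^ n ≤ F 0 := by
    intro n δ hδ
    induction n with
    | zero => simp
    | succ n ih =>
      have hnδ : (0:ℝ) ≤ n * δ := by positivity
      have hn1δ : (0:ℝ) ≤ (n + 1 : ℕ) * δ := by positivity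
      have hstep : F ((n + 1 : ℕ) * δ) * (1 + δ / r) ≤ F (n * δ) := by
        have h1 : ((n + 1 : ℕ) * δ : ℝ) - n * δ = δ := by push_cast; ring
        have h2 := key (n * δ) ((n + 1 : ℕ) * δ) hnδ (by push_cast; nlinarith)
        rw [h1] at h2
        have h3 := hineq ((n + 1 : ℕ) * δ) hn1δ
        have h4 : F ((n + 1 : ℕ) * δ) * (δ / r) ≤ δ * h ((n + 1 : ℕ) * δ) := by
          rw [mul_div_assoc' , div_le_iff₀ hr] at *
          calc F ((n + 1 : ℕ) * δ) * δ ≤ r * h ((n + 1 : ℕ) * δ) * δ := by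
                apply mul_le_mul_of_nonneg_right h3 hδ
            _ = δ * h ((n + 1 : ℕ) * δ) * r := by ring
        nlinarith
      calc F ((n + 1 : ℕ) * δ) * (1 + δ / r) ^ (n + 1)
          = F ((n + 1 : ℕ) * δ) * (1 + δ / r) * (1 + δ / r) ^ n := by ring
        _ ≤ F (n * δ) * (1 + δ / r) ^ n := by
            apply mul_le_mul_of_nonneg_right hstep (by positivity)
        _ ≤ F 0 := ih
  -- continuous decay bound
  have decay : ∀ x : ℝ, 0 ≤ x → F x * Real.exp (x / r) ≤ F 0 := by
    intro x hx
    have htend : Filter.Tendsto (fun n : ℕ => F x * (1 + (x / r) / n) ^ n)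
        Filter.atTop (nhds (F x * Real.exp (x / r))) :=
      (Real.tendsto_one_add_div_pow_exp (x / r)).const_mul (F x)
    refine le_of_tendsto htend (Filter.eventually_atTop.mpr ⟨1, fun n hn => ?_⟩)
    have hn' : (0:ℝ) < n := by exact_mod_cast hn
    have := iter n (x / n) (by positivity)
    have hxx : (n : ℝ) * (x / n) = x := by field_simp
    rw [hxx] at this
    have : F x * (1 + x / n / r) ^ n ≤ F 0 := this
    have heq : x / r / n = x / n / r := by ring
    rw [heq]
    exact this
  -- conclude
  intro t ht
  have ht0 : 0 ≤ t := le_trans hr.le ht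
  have htr : 0 ≤ t - r := by linarith
  have h1 := key (t - r) t htr (by linarith)
  have h2 : t - (t - r) = r := by ring
  rw [h2] at h1
  have h3 : r * h t ≤ F (t - r) := by
    have := hFnonneg t ht0
    linarith
  have h4 := decay (t - r) htr
  have h5 : F 0 ≤ r * h 0 := hineq 0 le_rfl
  have hexp : (0:ℝ) < Real.exp ((t - r) / r) := Real.exp_pos _
  have h6 : F (t - r) ≤ r * h 0 * Real.exp (-((t - r) / r)) := by
    rw [Real.exp_neg, ← div_eq_mul_inv, le_div_iff₀ hexp]
    calc F (t - r) * Real.exp ((t - r) / r) ≤ F 0 := h4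
      _ ≤ r * h 0 := h5
  have h7 : -((t - r) / r) = 1 - t / r := by field_simp; ring
  rw [h7] at h6
  have := le_trans h3 h6
  exact le_of_mul_le_mul_left (by linarith) hr
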